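/- Let T be a compact Hausdorff space, A a unital C*-algebra containing C(T) as a unital C*-subalgebra. An element a ∈ A satisfies φ a ψ = 0 for all φ, ψ ∈ C(T) with disjoint supports if and only if a commutes with every element of C(T). -/

import Mathlib

set_option linter.unusedSectionVars false
set_option maxHeartbeats 1000000

noncomputable section SimonenkoReal

/-- clamp to `[0,1]` -/
def r0 (u : ℝ) : ℝ := min (max u 0) 1

lemma r0_cont : Continuous r0 := (continuous_id.max continuous_const).min continuous_const
lemma r0_mono : Monotone r0 := fun _ _ h => min_le_min (max_le_max h le_rfl) le_rfl
lemma r0_nonneg (u : ℝ) : 0 ≤ r0 u := le_min (le_max_right _ _) zero_le_one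
lemma r0_le_one (u : ℝ) : r0 u ≤ 1 := min_le_right _ _
lemma r0_of_nonpos {u : ℝ} (h : u ≤ 0) : r0 u = 0 := by
  simp [r0, max_eq_right h, min_eq_left zero_le_one]
lemma r0_of_one_le {u : ℝ} (h : 1 ≤ u) : r0 u = 1 := by
  have : max u 0 = u := max_eq_left (zero_le_one.trans h)
  simp [r0, this, min_eq_right h]

/-- tent function centered at `c`, support `[c-1,c+1]`, summing to 1 over integer grid -/
def tent (c u : ℝ) : ℝ := r0 (u - c + 1) - r0 (u - c)

lemma tent_cont (c : ℝ) : Continuous (tent c) :=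
  ((r0_cont.comp (by fun_prop)).sub (r0_cont.comp (by fun_prop)))
lemma tent_nonneg (c u : ℝ) : 0 ≤ tent c u :=
  sub_nonneg.2 (r0_mono (by linarith))
lemma tent_le_one (c u : ℝ) : tent c u ≤ 1 :=
  sub_le_iff_le_add.2 (le_add_of_le_of_nonneg (r0_le_one _) (r0_nonneg _))
lemma tent_eq_zero {c u : ℝ} (h : 1 ≤ |u - c|) : tent c u = 0 := by
  rcases abs_le.1 (le_refl |u - c|) with _
  rcases le_abs.1 h with h1 | h1
  · rw [tent, r0_of_one_le (by linarith), r0_of_one_le (by linarith), sub_self]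
  · rw [tent, r0_of_nonpos (by linarith), r0_of_nonpos (by linarith), sub_self]
lemma tent_support {c u : ℝ} (h : tent c u ≠ 0) : |u - c| ≤ 1 := by
  by_contra hc; exact h (tent_eq_zero (le_of_lt (lt_of_not_ge hc)))

lemma tent_sum {n : ℕ} {u : ℝ} (h0 : 0 ≤ u) (hn : u ≤ n) :
    ∑ i ∈ Finset.range (n + 1), tent (i : ℝ) u = 1 := by
  have : ∀ i ∈ Finset.range (n+1), tent (i:ℝ) u
      = (fun k : ℕ => r0 (u - k + 1)) i - (fun k : ℕ => r0 (u - k + 1)) (i+1) := by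
    intro i _
    simp only [tent]
    push_cast
    ring_nf
  rw [Finset.sum_congr rfl this, Finset.sum_range_sub']
  rw [r0_of_one_le (by push_cast; linarith), r0_of_nonpos (by push_cast; linarith), sub_zero]

/-- plateau: 1 on `closedBall c α`, 0 outside `ball c β` -/
def plat (α β c u : ℝ) : ℝ := r0 ((β - |u - c|) / (β - α))

lemma plat_cont (α β c : ℝ) : Continuous (plat α β c) :=
  r0_cont.comp (by fun_prop)
lemma plat_nonneg (α β c u : ℝ) : 0 ≤ plat α β c u := r0_nonneg _
lemma plat_le_one (α β c u : ℝ) : plat α β c u ≤ 1 := r0_le_one _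
lemma plat_eq_one {α β c u : ℝ} (hab : α < β) (h : |u - c| ≤ α) : plat α β c u = 1 :=
  r0_of_one_le ((le_div_iff₀ (by linarith)).2 (by linarith))
lemma plat_eq_zero {α β c u : ℝ} (hab : α < β) (h : β ≤ |u - c|) : plat α β c u = 0 :=
  r0_of_nonpos (div_nonpos_iff.2 (Or.inr ⟨by linarith, by linarith⟩))
lemma plat_support {α β c u : ℝ} (hab : α < β) (h : plat α β c u ≠ 0) : |u - c| < β := by
  by_contra hc; exact h (plat_eq_zero hab (le_of_not_gt hc))

end SimonenkoReal

section CT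
variable {T : Type*} [TopologicalSpace T] [CompactSpace T] [T2Space T]

/-- real function composed with `F`, viewed in `C(T, ℂ)` -/
noncomputable def cR (h : ℝ → ℝ) (hh : Continuous h) (F : C(T, ℝ)) : C(T, ℂ) :=
  ⟨fun t => (h (F t) : ℂ), Complex.continuous_ofReal.comp (hh.comp F.continuous)⟩

@[simp] lemma cR_apply (h : ℝ → ℝ) (hh : Continuous h) (F : C(T, ℝ)) (t : T) :
    cR h hh F t = (h (F t) : ℂ) := rfl

lemma cR_mul (h₁ h₂ : ℝ → ℝ) (c₁ : Continuous h₁) (c₂ : Continuous h₂) (F : C(T, ℝ)) :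
    cR h₁ c₁ F * cR h₂ c₂ F = cR (fun u => h₁ u * h₂ u) (c₁.mul c₂) F := by
  ext t; simp [Complex.ofReal_mul]

lemma cR_sub (h₁ h₂ : ℝ → ℝ) (c₁ : Continuous h₁) (c₂ : Continuous h₂) (F : C(T, ℝ)) :
    cR h₁ c₁ F - cR h₂ c₂ F = cR (fun u => h₁ u - h₂ u) (c₁.sub c₂) F := by
  ext t; simp

lemma cR_one (F : C(T, ℝ)) : cR (fun _ => 1) continuous_const F = 1 := by
  ext t; simp

lemma cR_const (r : ℝ) (F : C(T, ℝ)) :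
    cR (fun _ => r) continuous_const F = algebraMap ℂ C(T, ℂ) (r : ℂ) := by
  ext t; simp

lemma cR_star (h : ℝ → ℝ) (hh : Continuous h) (F : C(T, ℝ)) :
    star (cR h hh F) = cR h hh F := by
  ext t; simp [Complex.conj_ofReal]

lemma cR_norm_le (h : ℝ → ℝ) (hh : Continuous h) (F : C(T, ℝ)) {c : ℝ} (hc : 0 ≤ c)
    (hb : ∀ u, |h u| ≤ c) : ‖cR h hh F‖ ≤ c := by
  rw [ContinuousMap.norm_le _ hc]
  intro t
  simpa using hb (F t)

lemma cR_tsupport_subset (h : ℝ → ℝ) (hh : Continuous h) (F : C(T, ℝ)) {S : Set ℝ}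
    (hS : IsClosed S) (hsupp : ∀ u, h u ≠ 0 → u ∈ S) :
    tsupport ⇑(cR h hh F) ⊆ F ⁻¹' S := by
  apply closure_minimal _ (hS.preimage F.continuous)
  intro t ht
  simp only [Function.mem_support, cR_apply, ne_eq, Complex.ofReal_eq_zero] at ht
  exact hsupp _ ht

end CT


section Core
variable {T : Type*} [TopologicalSpace T] [CompactSpace T] [T2Space T]
variable {A : Type*} [NormedRing A] [StarRing A] [CStarRing A] [NormedAlgebra ℂ A]
  [StarModule ℂ A] [CompleteSpace A]

open Finset

lemma sep_real {i j : ℕ} (hij : i ≠ j) (hmod : i % 7 = j % 7) : (7:ℝ) ≤ |(i:ℝ) - (j:ℝ)| := by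
  wlog h : i < j generalizing i j
  · rw [abs_sub_comm]
    exact this hij.symm hmod.symm (by omega)
  have hd : 7 ∣ j - i := (Nat.modEq_iff_dvd' h.le).mp hmod
  have h7 : 7 ≤ j - i := Nat.le_of_dvd (by omega) hd
  have h7' : (7:ℝ) ≤ (j:ℝ) - (i:ℝ) := by
    have := (Nat.cast_le (α := ℝ)).mpr h7
    rwa [Nat.cast_sub h.le] at this
  rw [abs_sub_comm, abs_of_nonneg (by linarith)]
  linarith

lemma simonenko_core (ι : C(T, ℂ) →⋆ₐ[ℂ] A) (a : A)
    (H : ∀ φ ψ : C(T, ℂ), Disjoint (tsupport ⇑φ) (tsupport ⇑ψ) → ι φ * a * ι ψ = 0)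
    (n : ℕ) (F : C(T, ℝ)) (hF0 : ∀ t, 0 ≤ F t) (hFn : ∀ t, F t ≤ n) :
    ‖a * ι (cR id continuous_id F) - ι (cR id continuous_id F) * a‖ ≤ 21 * ‖a‖ := by
  rcases subsingleton_or_nontrivial A with hs | hnt
  · rw [Subsingleton.elim (a * ι (cR id continuous_id F) - ι (cR id continuous_id F) * a) 0,
      norm_zero]
    positivity
  letI : CStarAlgebra A :=
    { ‹NormedRing A›, ‹StarRing A›, ‹CompleteSpace A›, ‹CStarRing A›, ‹NormedAlgebra ℂ A›,
      ‹StarModule ℂ A› with }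
  letI : PartialOrder A := CStarAlgebra.spectralOrder A
  letI : StarOrderedRing A := CStarAlgebra.spectralOrderedRing A
  -- toolkit on elements of the form `ι (cR h _ F)`
  have Emul : ∀ (h₁ h₂ h₃ : ℝ → ℝ) (c₁ : Continuous h₁) (c₂ : Continuous h₂)
      (c₃ : Continuous h₃), (∀ u, h₁ u * h₂ u = h₃ u) →
      ι (cR h₁ c₁ F) * ι (cR h₂ c₂ F) = ι (cR h₃ c₃ F) := by
    intro h₁ h₂ h₃ c₁ c₂ c₃ hpt
    rw [← map_mul, cR_mul]
    congr 1
    ext t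
    simp [hpt]
  have Esub : ∀ (h₁ h₂ h₃ : ℝ → ℝ) (c₁ : Continuous h₁) (c₂ : Continuous h₂)
      (c₃ : Continuous h₃), (∀ u, h₁ u - h₂ u = h₃ u) →
      ι (cR h₁ c₁ F) - ι (cR h₂ c₂ F) = ι (cR h₃ c₃ F) := by
    intro h₁ h₂ h₃ c₁ c₂ c₃ hpt
    rw [← map_sub, cR_sub]
    congr 1
    ext t
    simp [hpt]
  have Estar : ∀ (h : ℝ → ℝ) (c : Continuous h), star (ι (cR h c F)) = ι (cR h c F) := by
    intro h c
    rw [← map_star, cR_star]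
  have Eone : ι (cR (fun _ => 1) continuous_const F) = 1 := by rw [cR_one, map_one]
  have Econst : ∀ r : ℝ, ι (cR (fun _ => r) continuous_const F) = algebraMap ℂ A (r : ℂ) := by
    intro r
    rw [cR_const]
    exact ι.commutes _
  have Enorm : ∀ (h : ℝ → ℝ) (c : Continuous h) (b : ℝ), 0 ≤ b → (∀ u, |h u| ≤ b) →
      ‖ι (cR h c F)‖ ≤ b := by
    intro h c b hb hub
    exact le_trans (NonUnitalStarAlgHom.norm_apply_le ι _) (cR_norm_le h c F hb hub)
  have Epos : ∀ (h : ℝ → ℝ) (c : Continuous h), (∀ u, 0 ≤ h u) → 0 ≤ ι (cR h c F) := by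
    intro h c h0
    have hsq : ι (cR (fun u => Real.sqrt (h u)) (Real.continuous_sqrt.comp c) F) *
        ι (cR (fun u => Real.sqrt (h u)) (Real.continuous_sqrt.comp c) F) = ι (cR h c F) :=
      Emul _ _ _ _ _ _ (fun u => Real.mul_self_sqrt (h0 u))
    have hpos := star_mul_self_nonneg
      (ι (cR (fun u => Real.sqrt (h u)) (Real.continuous_sqrt.comp c) F))
    rwa [Estar, hsq] at hpos
  have Ele : ∀ (h₁ h₂ : ℝ → ℝ) (c₁ : Continuous h₁) (c₂ : Continuous h₂),
      (∀ u, h₁ u ≤ h₂ u) → ι (cR h₁ c₁ F) ≤ ι (cR h₂ c₂ F) := by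
    intro h₁ h₂ c₁ c₂ hle
    have h := Epos (fun u => h₂ u - h₁ u) (c₂.sub c₁) (fun u => sub_nonneg.2 (hle u))
    rw [← Esub h₂ h₁ (fun u => h₂ u - h₁ u) c₂ c₁ (c₂.sub c₁) (fun _ => rfl)] at h
    exact sub_nonneg.mp h
  have Eloc : ∀ (h₁ h₂ : ℝ → ℝ) (c₁ : Continuous h₁) (c₂ : Continuous h₂) (S₁ S₂ : Set ℝ),
      IsClosed S₁ → IsClosed S₂ → Disjoint S₁ S₂ → (∀ u, h₁ u ≠ 0 → u ∈ S₁) →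
      (∀ u, h₂ u ≠ 0 → u ∈ S₂) → ι (cR h₁ c₁ F) * a * ι (cR h₂ c₂ F) = 0 := by
    intro h₁ h₂ c₁ c₂ S₁ S₂ hS₁ hS₂ hdisj hm₁ hm₂
    exact H _ _ (Set.disjoint_of_subset (cR_tsupport_subset h₁ c₁ F hS₁ hm₁)
      (cR_tsupport_subset h₂ c₂ F hS₂ hm₂) (hdisj.preimage F))
  have halg : ∀ c d : ℝ, c ≤ d → algebraMap ℝ A c ≤ algebraMap ℝ A d := by
    intro c d h
    rw [← sub_nonneg, ← map_sub]
    have hsa : star (algebraMap ℝ A (Real.sqrt (d - c))) = algebraMap ℝ A (Real.sqrt (d - c)) := by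
      rw [Algebra.algebraMap_eq_smul_one, star_smul, star_one, star_trivial]
    have hid : algebraMap ℝ A (d - c) = star (algebraMap ℝ A (Real.sqrt (d - c))) *
        algebraMap ℝ A (Real.sqrt (d - c)) := by
      rw [hsa, ← map_mul, Real.mul_self_sqrt (sub_nonneg.2 h)]
    rw [hid]
    exact star_mul_self_nonneg _
  -- continuity facts
  have csq : ∀ i : ℕ, Continuous (fun u => Real.sqrt (tent (i:ℝ) u)) :=
    fun i => Real.continuous_sqrt.comp (tent_cont _)
  have ckk : ∀ i : ℕ, Continuous (plat (3/2) 2 (i:ℝ)) := fun i => plat_cont _ _ _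
  have ckk' : ∀ i : ℕ, Continuous (plat (5/2) 3 (i:ℝ)) := fun i => plat_cont _ _ _
  have cid : ∀ i : ℕ, Continuous (fun u : ℝ => u - (i:ℝ)) :=
    fun i => continuous_id.sub continuous_const
  -- elements
  set Φ : A := ι (cR id continuous_id F) with hPhi
  set C : ℕ → A := fun i => ι (cR (tent (i:ℝ)) (tent_cont _) F) with hC
  set R : ℕ → A := fun i => ι (cR (fun u => Real.sqrt (tent (i:ℝ) u)) (csq i) F) with hR
  set P : ℕ → A := fun i => ι (cR (plat (3/2) 2 (i:ℝ)) (ckk i) F) with hP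
  set Q : ℕ → A := fun i => ι (cR (plat (5/2) 3 (i:ℝ)) (ckk' i) F) with hQ
  set G : ℕ → A := fun i => ι (cR (fun u => (u - (i:ℝ)) * Real.sqrt (tent (i:ℝ) u))
    ((cid i).mul (csq i)) F) with hG
  set W : ℕ → A := fun i => ι (cR (fun u => (u - (i:ℝ)) * plat (3/2) 2 (i:ℝ) u)
    ((cid i).mul (ckk i)) F) with hW
  set M : ℕ → A := fun i => ι (cR (fun u => (u - (i:ℝ)) * tent (i:ℝ) u)
    ((cid i).mul (tent_cont _)) F) with hM
  set L : ℕ → A := fun i => ι (cR (fun u => u - (i:ℝ)) (cid i) F) with hL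
  set Y : ℕ → A := fun i => a * G i - W i * (a * R i) with hY
  set Z : ℕ → A := fun i => Q i * (Y i * R i) with hZ
  set X : A := a * Φ - Φ * a with hX
  -- algebraic identities between the elements
  have eGR : ∀ i : ℕ, G i * R i = M i := by
    intro i
    simp only [hG, hR, hM]
    exact Emul _ _ _ _ _ _ (fun u => by
      rw [mul_assoc, Real.mul_self_sqrt (tent_nonneg _ _)])
  have eRR : ∀ i : ℕ, R i * R i = C i := by
    intro i
    simp only [hR, hC]
    exact Emul _ _ _ _ _ _ (fun u => Real.mul_self_sqrt (tent_nonneg _ _))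
  have eQW : ∀ i : ℕ, Q i * W i = W i := by
    intro i
    simp only [hQ, hW]
    refine Emul _ _ _ _ _ _ (fun u => ?_)
    by_cases hz : plat (3/2) 2 (i:ℝ) u = 0
    · simp [hz]
    · have h2 : |u - (i:ℝ)| < 2 := plat_support (by norm_num) hz
      rw [plat_eq_one (by norm_num) (h2.le.trans (by norm_num))]
      ring
  have eW : ∀ i : ℕ, L i * P i = W i := by
    intro i
    simp only [hL, hP, hW]
    exact Emul _ _ _ _ _ _ (fun u => rfl)
  have eLC : ∀ i : ℕ, L i * C i = M i := by
    intro i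
    simp only [hL, hC, hM]
    exact Emul _ _ _ _ _ _ (fun u => rfl)
  have eL : ∀ i : ℕ, Φ - algebraMap ℂ A ((i:ℝ):ℂ) = L i := by
    intro i
    simp only [hPhi, hL]
    rw [← Econst (i:ℝ)]
    exact Esub _ _ _ _ _ _ (fun u => rfl)
  have hRs : ∀ i : ℕ, star (R i) = R i := by
    intro i
    simp only [hR]
    exact Estar _ _
  have hQs : ∀ i : ℕ, star (Q i) = Q i := by
    intro i
    simp only [hQ]
    exact Estar _ _
  -- Claim A : X * C i = Z i
  have claimA : ∀ i : ℕ, X * C i = Z i := by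
    intro i
    have locQM : Q i * (a * M i) = a * M i := by
      have h0 : ι (cR (fun u => 1 - plat (5/2) 3 (i:ℝ) u) (continuous_const.sub (ckk' i)) F) * a *
          ι (cR (fun u => (u - (i:ℝ)) * tent (i:ℝ) u) ((cid i).mul (tent_cont _)) F) = 0 := by
        refine Eloc _ _ _ _ ((Metric.ball (i:ℝ) (5/2))ᶜ) (Metric.closedBall (i:ℝ) 1)
          Metric.isOpen_ball.isClosed_compl Metric.isClosed_closedBall
          (Disjoint.mono_right (Metric.closedBall_subset_ball (by norm_num)) disjoint_compl_left)
          ?_ ?_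
        · intro u hu
          simp only [Set.mem_compl_iff, Metric.mem_ball, Real.dist_eq, not_lt]
          by_contra hc
          push_neg at hc
          exact hu (by rw [plat_eq_one (by norm_num) hc.le, sub_self])
        · intro u hu
          have ht : tent (i:ℝ) u ≠ 0 := fun h => hu (by rw [h, mul_zero])
          simpa [Metric.mem_closedBall, Real.dist_eq] using tent_support ht
      have e1 : (1 : A) - Q i = ι (cR (fun u => 1 - plat (5/2) 3 (i:ℝ) u)
          (continuous_const.sub (ckk' i)) F) := by
        simp only [hQ]
        rw [← Eone]
        exact Esub _ _ _ _ _ _ (fun u => rfl)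
      have h1 : (1 - Q i) * (a * M i) = 0 := by
        rw [e1, hM, ← mul_assoc]
        exact h0
      have h2 : 1 * (a * M i) - Q i * (a * M i) = 0 := by rw [← sub_mul]; exact h1
      have h3 := sub_eq_zero.mp h2
      simpa using h3.symm
    have locPC : P i * (a * C i) = a * C i := by
      have h0 : ι (cR (fun u => 1 - plat (3/2) 2 (i:ℝ) u) (continuous_const.sub (ckk i)) F) * a *
          ι (cR (tent (i:ℝ)) (tent_cont _) F) = 0 := by
        refine Eloc _ _ _ _ ((Metric.ball (i:ℝ) (3/2))ᶜ) (Metric.closedBall (i:ℝ) 1)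
          Metric.isOpen_ball.isClosed_compl Metric.isClosed_closedBall
          (Disjoint.mono_right (Metric.closedBall_subset_ball (by norm_num)) disjoint_compl_left)
          ?_ ?_
        · intro u hu
          simp only [Set.mem_compl_iff, Metric.mem_ball, Real.dist_eq, not_lt]
          by_contra hc
          push_neg at hc
          exact hu (by rw [plat_eq_one (by norm_num) hc.le, sub_self])
        · intro u hu
          simpa [Metric.mem_closedBall, Real.dist_eq] using tent_support hu
      have e1 : (1 : A) - P i = ι (cR (fun u => 1 - plat (3/2) 2 (i:ℝ) u)
          (continuous_const.sub (ckk i)) F) := by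
        simp only [hP]
        rw [← Eone]
        exact Esub _ _ _ _ _ _ (fun u => rfl)
      have h1 : (1 - P i) * (a * C i) = 0 := by
        rw [e1, hC, ← mul_assoc]
        exact h0
      have h2 : 1 * (a * C i) - P i * (a * C i) = 0 := by rw [← sub_mul]; exact h1
      have h3 := sub_eq_zero.mp h2
      simpa using h3.symm
    have hza : algebraMap ℂ A ((i:ℝ):ℂ) * a = a * algebraMap ℂ A ((i:ℝ):ℂ) :=
      Algebra.commutes _ a
    symm
    calc Z i = Q i * ((a * G i - W i * (a * R i)) * R i) := by rw [hZ, hY]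
      _ = Q i * (a * (G i * R i)) - (Q i * W i) * (a * (R i * R i)) := by noncomm_ring
      _ = Q i * (a * M i) - W i * (a * C i) := by rw [eGR, eRR, eQW]
      _ = a * M i - L i * (a * C i) := by rw [locQM, ← eW, mul_assoc, locPC]
      _ = a * (L i * C i) - L i * (a * C i) := by rw [eLC]
      _ = X * C i := by
          rw [← eL, hX]
          have hzz : algebraMap ℂ A ((i:ℝ):ℂ) * (a * C i) =
              a * (algebraMap ℂ A ((i:ℝ):ℂ) * C i) := by
            rw [← mul_assoc, hza, mul_assoc]
          calc a * ((Φ - algebraMap ℂ A ((i:ℝ):ℂ)) * C i) -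
              (Φ - algebraMap ℂ A ((i:ℝ):ℂ)) * (a * C i)
              = (a * Φ - Φ * a) * C i + (algebraMap ℂ A ((i:ℝ):ℂ) * (a * C i) -
                a * (algebraMap ℂ A ((i:ℝ):ℂ) * C i)) := by noncomm_ring
            _ = (a * Φ - Φ * a) * C i := by rw [hzz, sub_self, add_zero]
  -- the C i sum to 1
  have hsum1 : ∑ i ∈ range (n+1), C i = 1 := by
    simp only [hC]
    rw [← map_sum]
    have e : ∑ i ∈ range (n+1), cR (tent (i:ℝ)) (tent_cont _) F = 1 := by
      ext t
      rw [ContinuousMap.coe_sum]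
      simp only [Finset.sum_apply, cR_apply, ContinuousMap.one_apply]
      calc ∑ i ∈ range (n+1), ((tent (i:ℝ) (F t) : ℝ) : ℂ)
          = ((∑ i ∈ range (n+1), tent (i:ℝ) (F t) : ℝ) : ℂ) := by norm_cast
        _ = 1 := by rw [tent_sum (hF0 t) (hFn t)]; norm_num
    rw [e, map_one]
  have hXsum : X = ∑ i ∈ range (n+1), Z i := by
    calc X = X * 1 := (mul_one X).symm
      _ = X * ∑ i ∈ range (n+1), C i := by rw [hsum1]
      _ = ∑ i ∈ range (n+1), X * C i := Finset.mul_sum _ _ _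
      _ = ∑ i ∈ range (n+1), Z i := Finset.sum_congr rfl (fun i _ => claimA i)
  have hfib : X = ∑ r ∈ range 7, ∑ i ∈ (range (n+1)).filter (fun i => i % 7 = r), Z i := by
    rw [hXsum]
    exact (Finset.sum_fiberwise_of_maps_to
      (fun i _ => Finset.mem_range.mpr (Nat.mod_lt i (by norm_num))) Z).symm
  -- norm bounds
  have hYn : ∀ i : ℕ, ‖Y i‖ ≤ 3 * ‖a‖ := by
    intro i
    have hGn : ‖G i‖ ≤ 1 := by
      simp only [hG]
      refine Enorm _ _ 1 zero_le_one (fun u => ?_)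
      by_cases hz : tent (i:ℝ) u = 0
      · simp [hz]
      · have h1 : |u - (i:ℝ)| ≤ 1 := tent_support hz
        rw [abs_mul, abs_of_nonneg (Real.sqrt_nonneg _)]
        have h2 : Real.sqrt (tent (i:ℝ) u) ≤ 1 := Real.sqrt_le_one.mpr (tent_le_one _ _)
        nlinarith [Real.sqrt_nonneg (tent (i:ℝ) u), abs_nonneg (u - (i:ℝ))]
    have hWn : ‖W i‖ ≤ 2 := by
      simp only [hW]
      refine Enorm _ _ 2 (by norm_num) (fun u => ?_)
      by_cases hz : plat (3/2) 2 (i:ℝ) u = 0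
      · simp [hz]
      · have h1 : |u - (i:ℝ)| < 2 := plat_support (by norm_num) hz
        rw [abs_mul, abs_of_nonneg (plat_nonneg _ _ _ _)]
        have h2 := plat_le_one (3/2) 2 (i:ℝ) u
        have h3 := plat_nonneg (3/2) 2 (i:ℝ) u
        nlinarith [abs_nonneg (u - (i:ℝ))]
    have hRn : ‖R i‖ ≤ 1 := by
      simp only [hR]
      refine Enorm _ _ 1 zero_le_one (fun u => ?_)
      rw [abs_of_nonneg (Real.sqrt_nonneg _)]
      exact Real.sqrt_le_one.mpr (tent_le_one _ _)
    simp only [hY]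
    have t1 : ‖a * G i‖ ≤ ‖a‖ * 1 :=
      le_trans (norm_mul_le _ _) (mul_le_mul_of_nonneg_left hGn (norm_nonneg a))
    have t2 : ‖W i * (a * R i)‖ ≤ 2 * (‖a‖ * 1) :=
      le_trans (norm_mul_le _ _) (mul_le_mul hWn
        (le_trans (norm_mul_le _ _) (mul_le_mul_of_nonneg_left hRn (norm_nonneg a)))
        (norm_nonneg _) (by norm_num))
    calc ‖a * G i - W i * (a * R i)‖ ≤ ‖a * G i‖ + ‖W i * (a * R i)‖ := norm_sub_le _ _
      _ ≤ ‖a‖ * 1 + 2 * (‖a‖ * 1) := add_le_add t1 t2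
      _ = 3 * ‖a‖ := by ring
  -- Claim C : each fiber sum has small norm
  have claimC : ∀ r : ℕ, ‖∑ i ∈ (range (n+1)).filter (fun i => i % 7 = r), Z i‖ ≤ 3 * ‖a‖ := by
    intro r
    set s' := (range (n+1)).filter (fun i => i % 7 = r) with hs'
    set S := ∑ i ∈ s', Z i with hS
    have horth : ∀ i ∈ s', ∀ j ∈ s', i ≠ j → Q i * Q j = 0 := by
      intro i hi j hj hij
      have hmod : i % 7 = j % 7 := by
        rw [(Finset.mem_filter.mp hi).2, (Finset.mem_filter.mp hj).2]
      have hsep := sep_real hij hmod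
      have hpt : ∀ u, plat (5/2) 3 (i:ℝ) u * plat (5/2) 3 (j:ℝ) u = 0 := by
        intro u
        rcases le_or_gt 3 |u - (i:ℝ)| with h | h
        · rw [plat_eq_zero (by norm_num) h, zero_mul]
        · have h3 : (3:ℝ) ≤ |u - (j:ℝ)| := by
            have htri : |(i:ℝ) - (j:ℝ)| ≤ |(i:ℝ) - u| + |u - (j:ℝ)| := abs_sub_le _ _ _
            rw [abs_sub_comm (i:ℝ) u] at htri
            linarith
          rw [plat_eq_zero (by norm_num) h3, mul_zero]
      have e0 : cR (fun _ => (0:ℝ)) continuous_const F = 0 := by ext t; simp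
      simp only [hQ]
      rw [Emul _ _ (fun _ => (0:ℝ)) _ _ continuous_const hpt, e0, map_zero]
    have hZstar : ∀ i : ℕ, star (Z i) = R i * (star (Y i) * Q i) := by
      intro i
      rw [hZ]
      simp only [star_mul, hRs, hQs]
      noncomm_ring
    have hdiag : ∀ i : ℕ, star (Z i) * Z i ≤ algebraMap ℝ A (9 * ‖a‖^2) * C i := by
      intro i
      have hQQ1 : Q i * Q i ≤ 1 := by
        have e : Q i * Q i = ι (cR (fun u => plat (5/2) 3 (i:ℝ) u * plat (5/2) 3 (i:ℝ) u)
            ((ckk' i).mul (ckk' i)) F) := by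
          simp only [hQ]
          exact Emul _ _ _ _ _ _ (fun u => rfl)
        rw [e, ← Eone]
        refine Ele _ _ _ _ (fun u => ?_)
        have h1 := plat_le_one (5/2) 3 (i:ℝ) u
        have h2 := plat_nonneg (5/2) 3 (i:ℝ) u
        nlinarith
      have hmid : star (Y i) * (Q i * Q i) * Y i ≤ algebraMap ℝ A (9 * ‖a‖^2) := by
        calc star (Y i) * (Q i * Q i) * Y i ≤ star (Y i) * 1 * Y i :=
              star_left_conjugate_le_conjugate hQQ1 (Y i)
          _ = star (Y i) * Y i := by rw [mul_one]
          _ ≤ algebraMap ℝ A (‖Y i‖^2) := CStarAlgebra.star_mul_le_algebraMap_norm_sq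
          _ ≤ algebraMap ℝ A (9 * ‖a‖^2) := by
              refine halg _ _ ?_
              have h := pow_le_pow_left₀ (norm_nonneg (Y i)) (hYn i) 2
              calc ‖Y i‖^2 ≤ (3*‖a‖)^2 := h
                _ = 9 * ‖a‖^2 := by ring
      have hconj := star_left_conjugate_le_conjugate hmid (R i)
      rw [hRs] at hconj
      have hl : R i * (star (Y i) * (Q i * Q i) * Y i) * R i = star (Z i) * Z i := by
        rw [hZstar, hZ]
        noncomm_ring
      have hr : R i * algebraMap ℝ A (9 * ‖a‖^2) * R i = algebraMap ℝ A (9 * ‖a‖^2) * C i := by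
        rw [show R i * algebraMap ℝ A (9 * ‖a‖^2) = algebraMap ℝ A (9 * ‖a‖^2) * R i from
          (Algebra.commutes _ _).symm, mul_assoc, eRR]
      rw [hl, hr] at hconj
      exact hconj
    have hexp : star S * S = ∑ i ∈ s', star (Z i) * Z i := by
      rw [hS, star_sum, Finset.sum_mul_sum]
      refine Finset.sum_congr rfl (fun i hi => ?_)
      refine Finset.sum_eq_single_of_mem i hi (fun j hj hji => ?_)
      have e : star (Z i) * Z j = (R i * star (Y i)) * (Q i * Q j) * (Y j * R j) := by
        rw [hZstar, hZ]
        noncomm_ring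
      rw [e, horth i hi j hj (fun h => hji h.symm), mul_zero, zero_mul]
    have hCpos : ∀ i : ℕ, (0:A) ≤ C i := by
      intro i
      simp only [hC]
      exact Epos _ _ (fun u => tent_nonneg _ _)
    have hsum_le : star S * S ≤ algebraMap ℝ A (9 * ‖a‖^2) * ∑ i ∈ s', C i := by
      rw [hexp, Finset.mul_sum]
      exact Finset.sum_le_sum (fun i _ => hdiag i)
    have hCs_le1 : ∑ i ∈ s', C i ≤ 1 := by
      calc ∑ i ∈ s', C i ≤ ∑ i ∈ range (n+1), C i :=
            Finset.sum_le_sum_of_subset_of_nonneg (Finset.filter_subset _ _)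
              (fun i _ _ => hCpos i)
        _ = 1 := hsum1
    have hnorm1 : ‖∑ i ∈ s', C i‖ ≤ 1 := by
      have h := CStarAlgebra.norm_le_norm_of_nonneg_of_le
        (Finset.sum_nonneg (fun i _ => hCpos i)) hCs_le1
      simpa using h
    have hfin : ‖S‖ * ‖S‖ ≤ 9 * ‖a‖^2 := by
      rw [← CStarRing.norm_star_mul_self]
      calc ‖star S * S‖ ≤ ‖algebraMap ℝ A (9 * ‖a‖^2) * ∑ i ∈ s', C i‖ :=
            CStarAlgebra.norm_le_norm_of_nonneg_of_le (star_mul_self_nonneg S) hsum_le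
        _ ≤ ‖algebraMap ℝ A (9 * ‖a‖^2)‖ * ‖∑ i ∈ s', C i‖ := norm_mul_le _ _
        _ ≤ ‖algebraMap ℝ A (9 * ‖a‖^2)‖ * 1 :=
            mul_le_mul_of_nonneg_left hnorm1 (norm_nonneg _)
        _ ≤ 9 * ‖a‖^2 := by
            rw [mul_one, Algebra.algebraMap_eq_smul_one, norm_smul, norm_one, mul_one,
              Real.norm_eq_abs, abs_of_nonneg (by positivity)]
    nlinarith [norm_nonneg S, norm_nonneg a]
  calc ‖X‖ = ‖∑ r ∈ range 7, ∑ i ∈ (range (n+1)).filter (fun i => i % 7 = r), Z i‖ := by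
        rw [hfib]
    _ ≤ ∑ r ∈ range 7, ‖∑ i ∈ (range (n+1)).filter (fun i => i % 7 = r), Z i‖ :=
        norm_sum_le _ _
    _ ≤ ∑ _r ∈ range 7, (3 * ‖a‖) := Finset.sum_le_sum (fun r _ => claimC r)
    _ = 21 * ‖a‖ := by
        rw [Finset.sum_const, Finset.card_range]
        push_cast
        ring

end Core

/-- Lemma `lemma:commute`: an element `a` of a unital C*-algebra `A`
containing `C(T)` (for `T` compact Hausdorff) satisfies the strong Simonenko local property
iff `a` commutes with every element of `C(T)`. -/
theorem strong_simonenko_local_property_iff_commutes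
    {T : Type*} [TopologicalSpace T] [CompactSpace T] [T2Space T]
    {A : Type*} [NormedRing A] [StarRing A] [CStarRing A] [NormedAlgebra ℂ A]
    [StarModule ℂ A] [CompleteSpace A]
    (ι : C(T, ℂ) →⋆ₐ[ℂ] A) (hι : Function.Injective ι) (a : A) :
    (∀ φ ψ : C(T, ℂ), Disjoint (tsupport ⇑φ) (tsupport ⇑ψ) → ι φ * a * ι ψ = 0) ↔
      (∀ φ : C(T, ℂ), Commute a (ι φ)) := by
  constructor
  · -- hard direction
    intro H φ
    -- step 1: it suffices to handle real-valued functions coming from `C(T, ℝ)`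
    have key : ∀ G : C(T, ℝ), Commute a (ι (cR id continuous_id G)) := by
      intro G
      set E : A := ι (cR id continuous_id G) with hE
      have hXzero : a * E - E * a = 0 := by
        set B : ℝ := ‖G‖ + 1 with hB
        have hBpos : (0:ℝ) < B := by positivity
        have hGb : ∀ t, |G t| ≤ B - 1 := by
          intro t
          have := G.norm_coe_le_norm t
          rw [Real.norm_eq_abs] at this
          simp only [hB]
          linarith
        have hbound : ∀ m : ℕ, 1 ≤ m → ‖a * E - E * a‖ ≤ 42 * B * ‖a‖ / m := by
          intro m hm
          have hmpos : (0:ℝ) < m := by exact_mod_cast hm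
          set c : ℝ := (m : ℝ) / (2 * B) with hc
          have hcpos : 0 < c := by positivity
          set Gm : C(T, ℝ) := ⟨fun t => c * (G t + B),
            (continuous_const.mul (G.continuous.add continuous_const))⟩ with hGm
          have hGm0 : ∀ t, 0 ≤ Gm t := by
            intro t
            have := hGb t
            have h1 : 0 ≤ G t + B := by cases abs_le.mp this; linarith
            simp only [hGm, ContinuousMap.coe_mk]
            exact mul_nonneg hcpos.le h1
          have hGmn : ∀ t, Gm t ≤ m := by
            intro t
            have := hGb t
            have h1 : G t + B ≤ 2 * B := by cases abs_le.mp this; linarith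
            have : c * (G t + B) ≤ c * (2 * B) := mul_le_mul_of_nonneg_left h1 hcpos.le
            simp only [hGm, ContinuousMap.coe_mk]
            calc c * (G t + B) ≤ c * (2 * B) := ‹_›
              _ = m := by
                rw [hc]
                exact div_mul_cancel₀ (m:ℝ) (by positivity)
          have hcore := simonenko_core ι a H m Gm hGm0 hGmn
          -- relate `ι (cR id Gm)` to `E`
          have hrel : ι (cR id continuous_id Gm) = (c : ℂ) • E + algebraMap ℂ A ((c * B : ℝ) : ℂ) := by
            have : cR id continuous_id Gm = (c : ℂ) • cR id continuous_id G +
                algebraMap ℂ C(T, ℂ) ((c * B : ℝ) : ℂ) := by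
              ext t
              simp only [ContinuousMap.add_apply, ContinuousMap.smul_apply, cR_apply,
                algebraMap_apply, id_eq, smul_eq_mul, hGm, ContinuousMap.coe_mk, mul_one]
              push_cast
              ring
            rw [this, map_add, map_smul]
            congr 1
            exact ι.commutes _
          have hcomm : a * ι (cR id continuous_id Gm) - ι (cR id continuous_id Gm) * a =
              (c : ℂ) • (a * E - E * a) := by
            rw [hrel]
            have hza : algebraMap ℂ A ((c * B : ℝ) : ℂ) * a = a * algebraMap ℂ A ((c * B : ℝ) : ℂ) :=
              Algebra.commutes _ a
            rw [mul_add, add_mul, mul_smul_comm, smul_mul_assoc, smul_sub]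
            rw [hza]
            abel
          rw [hcomm] at hcore
          rw [norm_smul] at hcore
          have hnc : ‖(c : ℂ)‖ = c := by
            rw [Complex.norm_real, Real.norm_eq_abs, abs_of_pos hcpos]
          rw [hnc] at hcore
          -- hcore : c * ‖a*E - E*a‖ ≤ 21 * ‖a‖
          rw [le_div_iff₀ hmpos]
          have h2 : ‖a * E - E * a‖ * (m:ℝ) = (c * ‖a * E - E * a‖) * (2 * B) := by
            rw [hc]
            field_simp
          calc ‖a * E - E * a‖ * (m:ℝ) = (c * ‖a * E - E * a‖) * (2 * B) := h2
            _ ≤ (21 * ‖a‖) * (2 * B) := by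
                have := mul_le_mul_of_nonneg_right hcore (by positivity : (0:ℝ) ≤ 2 * B)
                exact this
            _ = 42 * B * ‖a‖ := by ring
        by_contra hne
        have hpos : 0 < ‖a * E - E * a‖ := by
          rcases (norm_nonneg (a * E - E * a)).lt_or_eq with h | h
          · exact h
          · exact absurd (norm_eq_zero.mp h.symm) hne
        obtain ⟨m0, hm0⟩ := exists_nat_gt (42 * B * ‖a‖ / ‖a * E - E * a‖)
        have hm : 42 * B * ‖a‖ / ‖a * E - E * a‖ < ((m0 + 1 : ℕ) : ℝ) := by
          push_cast
          push_cast at hm0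
          linarith
        have h1 := hbound (m0 + 1) (by omega)
        have hmpos : (0:ℝ) < ((m0 + 1 : ℕ) : ℝ) := by positivity
        rw [div_lt_iff₀ hpos] at hm
        rw [le_div_iff₀ hmpos] at h1
        nlinarith
      exact (sub_eq_zero.mp hXzero)
    -- step 2: decompose φ into real and imaginary parts
    have hre : Commute a (ι (cR id continuous_id ⟨fun t => (φ t).re,
        Complex.continuous_re.comp φ.continuous⟩)) := key _
    have him : Commute a (ι (cR id continuous_id ⟨fun t => (φ t).im,
        Complex.continuous_im.comp φ.continuous⟩)) := key _
    have hdecomp : φ = cR id continuous_id ⟨fun t => (φ t).re,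
        Complex.continuous_re.comp φ.continuous⟩ + Complex.I • cR id continuous_id
        ⟨fun t => (φ t).im, Complex.continuous_im.comp φ.continuous⟩ := by
      ext t
      simp only [ContinuousMap.add_apply, ContinuousMap.smul_apply, cR_apply, id_eq,
        ContinuousMap.coe_mk, smul_eq_mul]
      rw [mul_comm]
      exact (Complex.re_add_im (φ t)).symm
    rw [hdecomp, map_add, map_smul]
    exact (hre.add_right (him.smul_right Complex.I))
  · -- easy direction
    intro h φ ψ hd
    have hψφ : φ * ψ = 0 := by
      ext t
      simp only [ContinuousMap.mul_apply, ContinuousMap.zero_apply]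
      by_cases ht : t ∈ tsupport ⇑φ
      · have : t ∉ tsupport ⇑ψ := Set.disjoint_left.mp hd ht
        rw [image_eq_zero_of_notMem_tsupport this, mul_zero]
      · rw [image_eq_zero_of_notMem_tsupport ht, zero_mul]
    calc ι φ * a * ι ψ = a * ι φ * ι ψ := by rw [(h φ).eq]
      _ = a * (ι φ * ι ψ) := by rw [mul_assoc]
      _ = a * ι (φ * ψ) := by rw [map_mul]
      _ = 0 := by rw [hψφ, map_zero, mul_zero]
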